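/- Fix κ ≥ 0 and suppose A ∈ C²(I, M²) and λ ∈ C⁰(I, ℝ) satisfy Ä(t) + κA(t) = λ(t)·cof A(t) on an interval I. Then det A(t) = 1 for all t ∈ I if and only if there exists t₀ ∈ I with det A(t₀) = 1 and ⟨Ȧ(t₀), cof A(t₀)⟩ = 0, and λ(t) = Λ(A(t), Ȧ(t)) = 2(κ − det Ȧ(t))/|A(t)|² for all t ∈ I. -/

import Mathlib

open Matrix

noncomputable section

/-- `M²`: the space of 2×2 real matrices. -/
abbrev M2 : Type := Matrix (Fin 2) (Fin 2) ℝ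

/-- Frobenius inner product `⟨A,B⟩ = tr(AᵀB)`. -/
def mip (A B : M2) : ℝ := (Aᵀ * B).trace

/-- Frobenius norm `|A| = ⟨A,A⟩^{1/2}`. -/
def fnorm (A : M2) : ℝ := Real.sqrt (mip A A)

/-- The matrix Z = [[0,−1],[1,0]]. -/
def Zm : M2 := !![0, -1; 1, 0]

/-- The matrix K = [[1,0],[0,−1]]. -/
def Km : M2 := !![1, 0; 0, -1]

/-- The matrix M = [[0,1],[1,0]]. -/
def Mm : M2 := !![0, 1; 1, 0]

/-- Cofactor: cof [[a,b],[c,d]] = [[d,−c],[−b,a]]. -/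
def cofm (A : M2) : M2 := !![A 1 1, -(A 1 0); -(A 0 1), A 0 0]

/-- Membership in SO(2,ℝ). -/
def isSO (U : M2) : Prop := U.det = 1 ∧ U⁻¹ = Uᵀ

/-- The rotation U(θ) = cos θ·I + sin θ·Z. -/
def Um (θ : ℝ) : M2 := Real.cos θ • (1 : M2) + Real.sin θ • Zm

/-- Invariant X₁(A,B) = ½|B|² + (κ/2)|A|². -/
def X1 (κ : ℝ) (A B : M2) : ℝ := (1/2) * mip B B + (κ/2) * mip A A

/-- Invariant X₂(A,B) = ½⟨ZA − AZ, B⟩. -/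
def X2 (A B : M2) : ℝ := (1/2) * mip (Zm * A - A * Zm) B

/-- Invariant X₃(A,B) = ½⟨ZA + AZ, B⟩. -/
def X3 (A B : M2) : ℝ := (1/2) * mip (Zm * A + A * Zm) B

/-- Lagrange multiplier Λ(A,B) = 2(κ − det B)/|A|². -/
def Lam (κ : ℝ) (A B : M2) : ℝ := 2 * (κ - B.det) / (mip A A)

attribute [local instance] Matrix.normedAddCommGroup Matrix.normedSpace

/-- Auxiliary: expand the Frobenius inner product in entries. -/
lemma mip_expand (X Y : M2) :
    mip X Y = X 0 0 * Y 0 0 + X 0 1 * Y 0 1 + X 1 0 * Y 1 0 + X 1 1 * Y 1 1 := by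
  simp [mip, Matrix.trace_fin_two, Matrix.mul_apply, Fin.sum_univ_two]
  ring

lemma cofm00 (X : M2) : cofm X 0 0 = X 1 1 := by simp [cofm]
lemma cofm01 (X : M2) : cofm X 0 1 = -(X 1 0) := by simp [cofm]
lemma cofm10 (X : M2) : cofm X 1 0 = -(X 0 1) := by simp [cofm]
lemma cofm11 (X : M2) : cofm X 1 1 = X 0 0 := by simp [cofm]

/-- Auxiliary: a nonzero determinant forces a nonzero Frobenius norm squared. -/
lemma mip_self_ne_zero_of_det_ne_zero {X : M2} (h : X.det ≠ 0) : mip X X ≠ 0 := by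
  intro h0
  apply h
  rw [mip_expand] at h0
  rw [Matrix.det_fin_two]
  nlinarith [sq_nonneg (X 0 0), sq_nonneg (X 0 1), sq_nonneg (X 1 0), sq_nonneg (X 1 1),
    sq_nonneg (X 0 0 + X 1 1), sq_nonneg (X 0 0 - X 1 1), sq_nonneg (X 0 1 + X 1 0),
    sq_nonneg (X 0 1 - X 1 0)]

/-- Auxiliary: a function with vanishing derivative on an open interval is constant there. -/
lemma eq_on_Ioo_of_hasDerivAt_zero {f : ℝ → ℝ} {c d : ℝ}
    (h : ∀ x ∈ Set.Ioo c d, HasDerivAt f 0 x) {x y : ℝ}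
    (hx : x ∈ Set.Ioo c d) (hy : y ∈ Set.Ioo c d) : f x = f y := by
  wlog hxy : x ≤ y generalizing x y
  · exact (this hy hx (le_of_not_ge hxy)).symm
  have hsub : Set.Icc x y ⊆ Set.Ioo c d := Set.Icc_subset_Ioo hx.1 hy.2
  have hcont : ContinuousOn f (Set.Icc x y) :=
    fun z hz => ((h z (hsub hz)).continuousAt).continuousWithinAt
  have := constant_of_has_deriv_right_zero hcont
    (fun z hz => (h z (hsub (Set.Ico_subset_Icc_self hz))).hasDerivWithinAt)
  exact (this y (Set.right_mem_Icc.2 hxy)).symm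

/-- Auxiliary: extract entrywise derivatives from a matrix-valued derivative. -/
lemma hasDerivAt_entry {A : ℝ → M2} {B : M2} {t : ℝ} (h : HasDerivAt A B t) (i j : Fin 2) :
    HasDerivAt (fun s => A s i j) (B i j) t :=
  (((ContinuousLinearMap.proj (R := ℝ) (φ := fun _ : Fin 2 => ℝ) j).comp
    (ContinuousLinearMap.proj (R := ℝ) (φ := fun _ : Fin 2 => Fin 2 → ℝ) i)).hasFDerivAt).comp_hasDerivAt t h

/-- characterization of solutions staying in SL(2,ℝ) via the
Lagrange multiplier identity. -/
theorem lagrange_multiplier_characterization (κ : ℝ) (hκ : 0 ≤ κ)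
    (a b : ℝ) (hab : a < b) (A A' A'' : ℝ → M2) (lam : ℝ → ℝ)
    (hA : ∀ t ∈ Set.Ioo a b, HasDerivAt A (A' t) t)
    (hA' : ∀ t ∈ Set.Ioo a b, HasDerivAt A' (A'' t) t)
    (hA'' : ContinuousOn A'' (Set.Ioo a b))
    (hlam : ContinuousOn lam (Set.Ioo a b))
    (hode : ∀ t ∈ Set.Ioo a b, A'' t + κ • A t = lam t • cofm (A t)) :
    (∀ t ∈ Set.Ioo a b, (A t).det = 1) ↔
      ((∃ t₀ ∈ Set.Ioo a b, (A t₀).det = 1 ∧ mip (A' t₀) (cofm (A t₀)) = 0) ∧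
        ∀ t ∈ Set.Ioo a b, lam t = Lam κ (A t) (A' t)) := by
  -- derivative of det
  have hgd : ∀ t ∈ Set.Ioo a b, HasDerivAt (fun s => (A s).det)
      (mip (A' t) (cofm (A t))) t := by
    intro t ht
    have h := ((hasDerivAt_entry (hA t ht) 0 0).mul (hasDerivAt_entry (hA t ht) 1 1)).sub
      ((hasDerivAt_entry (hA t ht) 0 1).mul (hasDerivAt_entry (hA t ht) 1 0))
    have heq : (fun s => (A s).det) = fun s => A s 0 0 * A s 1 1 - A s 0 1 * A s 1 0 := by
      funext s; rw [Matrix.det_fin_two]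
    rw [heq]
    refine h.congr_deriv ?_
    rw [mip_expand]
    simp only [cofm00, cofm01, cofm10, cofm11]
    ring
  -- derivative of t ↦ ⟨A'(t), cof A(t)⟩
  have hφd : ∀ t ∈ Set.Ioo a b, HasDerivAt (fun s => mip (A' s) (cofm (A s)))
      (mip (A'' t) (cofm (A t)) + 2 * (A' t).det) t := by
    intro t ht
    have h := ((((hasDerivAt_entry (hA' t ht) 0 0).mul (hasDerivAt_entry (hA t ht) 1 1)).sub
      ((hasDerivAt_entry (hA' t ht) 0 1).mul (hasDerivAt_entry (hA t ht) 1 0))).sub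
      ((hasDerivAt_entry (hA' t ht) 1 0).mul (hasDerivAt_entry (hA t ht) 0 1))).add
      ((hasDerivAt_entry (hA' t ht) 1 1).mul (hasDerivAt_entry (hA t ht) 0 0))
    have heq : (fun s => mip (A' s) (cofm (A s))) =
        fun s => A' s 0 0 * A s 1 1 - A' s 0 1 * A s 1 0 - A' s 1 0 * A s 0 1
          + A' s 1 1 * A s 0 0 := by
      funext s
      rw [mip_expand]
      simp only [cofm00, cofm01, cofm10, cofm11]
      ring
    rw [heq]
    refine h.congr_deriv ?_
    rw [mip_expand, Matrix.det_fin_two]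
    simp only [cofm00, cofm01, cofm10, cofm11]
    ring
  -- the ODE in invariant form
  have hkey : ∀ t ∈ Set.Ioo a b, mip (A'' t) (cofm (A t)) =
      lam t * mip (A t) (A t) - 2 * κ * (A t).det := by
    intro t ht
    have h := hode t ht
    have hE : ∀ i j : Fin 2, A'' t i j = lam t * cofm (A t) i j - κ * A t i j := by
      intro i j
      have h2 := congrFun (congrFun h i) j
      simp only [Matrix.add_apply, Matrix.smul_apply, smul_eq_mul] at h2
      linarith
    rw [mip_expand, mip_expand, Matrix.det_fin_two, hE 0 0, hE 0 1, hE 1 0, hE 1 1]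
    simp only [cofm00, cofm01, cofm10, cofm11]
    ring
  constructor
  · -- forward direction
    intro hdet1
    have hφ0 : ∀ t ∈ Set.Ioo a b, mip (A' t) (cofm (A t)) = 0 := by
      intro t ht
      have heq : (fun s => (A s).det) =ᶠ[nhds t] fun _ => (1 : ℝ) :=
        Filter.eventuallyEq_of_mem (isOpen_Ioo.mem_nhds ht) (fun s hs => hdet1 s hs)
      exact (hgd t ht).unique ((hasDerivAt_const t (1 : ℝ)).congr_of_eventuallyEq heq)
    have hψ0 : ∀ t ∈ Set.Ioo a b, mip (A'' t) (cofm (A t)) + 2 * (A' t).det = 0 := by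
      intro t ht
      have heq : (fun s => mip (A' s) (cofm (A s))) =ᶠ[nhds t] fun _ => (0 : ℝ) :=
        Filter.eventuallyEq_of_mem (isOpen_Ioo.mem_nhds ht) (fun s hs => hφ0 s hs)
      exact (hφd t ht).unique ((hasDerivAt_const t (0 : ℝ)).congr_of_eventuallyEq heq)
    have hmid : (a + b) / 2 ∈ Set.Ioo a b := ⟨by linarith, by linarith⟩
    refine ⟨⟨(a + b) / 2, hmid, hdet1 _ hmid, hφ0 _ hmid⟩, ?_⟩
    intro t ht
    have hm := mip_self_ne_zero_of_det_ne_zero (X := A t) (by rw [hdet1 t ht]; norm_num)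
    have h1 := hψ0 t ht
    rw [hkey t ht, hdet1 t ht] at h1
    rw [Lam]
    field_simp
    linarith
  · -- backward direction
    rintro ⟨⟨t₀, ht₀, hdet₀, hmip₀⟩, hlamEq⟩
    have hlm : ∀ t ∈ Set.Ioo a b, (A t).det ≠ 0 →
        lam t * mip (A t) (A t) = 2 * (κ - (A' t).det) := by
      intro t ht hd
      have hm := mip_self_ne_zero_of_det_ne_zero hd
      rw [hlamEq t ht, Lam]
      field_simp
    -- local propagation of the constraint
    have hprop : ∀ t₁ ∈ Set.Ioo a b, (A t₁).det = 1 → mip (A' t₁) (cofm (A t₁)) = 0 →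
        ∃ ε > 0, ∀ s ∈ Set.Ioo (t₁ - ε) (t₁ + ε),
          s ∈ Set.Ioo a b ∧ (A s).det = 1 ∧ mip (A' s) (cofm (A s)) = 0 := by
      intro t₁ ht₁ hg1 hp1
      have hcont : ContinuousAt (fun s => (A s).det) t₁ := (hgd t₁ ht₁).continuousAt
      have hne : ∀ᶠ s in nhds t₁, (A s).det ≠ 0 := hcont.eventually_ne (by rw [hg1]; norm_num)
      have hmem : {s | s ∈ Set.Ioo a b ∧ (A s).det ≠ 0} ∈ nhds t₁ := by
        filter_upwards [isOpen_Ioo.mem_nhds ht₁, hne] with s h1 h2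
        exact ⟨h1, h2⟩
      obtain ⟨ε, hε, hball⟩ := Metric.mem_nhds_iff.mp hmem
      have hJsub : Set.Ioo (t₁ - ε) (t₁ + ε) ⊆ {s | s ∈ Set.Ioo a b ∧ (A s).det ≠ 0} := by
        rw [← Real.ball_eq_Ioo]; exact hball
      have ht₁J : t₁ ∈ Set.Ioo (t₁ - ε) (t₁ + ε) := ⟨by linarith, by linarith⟩
      refine ⟨ε, hε, ?_⟩
      -- the energy function
      have hEd : ∀ s ∈ Set.Ioo (t₁ - ε) (t₁ + ε),
          HasDerivAt (fun s => mip (A' s) (cofm (A s)) * mip (A' s) (cofm (A s))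
            + 2 * κ * (((A s).det - 1) * ((A s).det - 1))) 0 s := by
        intro s hs
        obtain ⟨hsI, hsd⟩ := hJsub hs
        have hd1 := hφd s hsI
        have hd2 := (hgd s hsI).sub_const 1
        have hpsi : mip (A'' s) (cofm (A s)) + 2 * (A' s).det = 2 * κ * (1 - (A s).det) := by
          rw [hkey s hsI]
          have := hlm s hsI hsd
          linarith
        have h := (hd1.mul hd1).add (HasDerivAt.const_mul (2 * κ) (hd2.mul hd2))
        refine h.congr_deriv ?_
        linear_combination (2 * mip (A' s) (cofm (A s))) * hpsi
      have hE0 : ∀ s ∈ Set.Ioo (t₁ - ε) (t₁ + ε),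
          mip (A' s) (cofm (A s)) * mip (A' s) (cofm (A s))
            + 2 * κ * (((A s).det - 1) * ((A s).det - 1)) = 0 := by
        intro s hs
        have h := eq_on_Ioo_of_hasDerivAt_zero hEd hs ht₁J
        rw [h, hg1, hp1]
        ring
      have hφJ : ∀ s ∈ Set.Ioo (t₁ - ε) (t₁ + ε), mip (A' s) (cofm (A s)) = 0 := by
        intro s hs
        have h := hE0 s hs
        have h2 : mip (A' s) (cofm (A s)) * mip (A' s) (cofm (A s)) = 0 := by
          nlinarith [mul_self_nonneg (mip (A' s) (cofm (A s))),
            mul_self_nonneg ((A s).det - 1)]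
        exact mul_self_eq_zero.mp h2
      have hgJ : ∀ s ∈ Set.Ioo (t₁ - ε) (t₁ + ε), (A s).det = 1 := by
        intro s hs
        have hder : ∀ x ∈ Set.Ioo (t₁ - ε) (t₁ + ε), HasDerivAt (fun s => (A s).det) 0 x := by
          intro x hx
          have h := hgd x (hJsub hx).1
          rwa [hφJ x hx] at h
        have h := eq_on_Ioo_of_hasDerivAt_zero hder hs ht₁J
        rw [h, hg1]
      exact fun s hs => ⟨(hJsub hs).1, hgJ s hs, hφJ s hs⟩
    -- clopen argument on the connected interval
    intro t ht
    haveI : PreconnectedSpace (Set.Ioo a b) := Subtype.preconnectedSpace isPreconnected_Ioo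
    have hgc : ContinuousOn (fun s => (A s).det) (Set.Ioo a b) :=
      fun x hx => ((hgd x hx).continuousAt).continuousWithinAt
    have hφc : ContinuousOn (fun s => mip (A' s) (cofm (A s))) (Set.Ioo a b) :=
      fun x hx => ((hφd x hx).continuousAt).continuousWithinAt
    set S : Set (Set.Ioo a b) :=
      {x | (A x.1).det = 1 ∧ mip (A' x.1) (cofm (A x.1)) = 0} with hSdef
    have hSclosed : IsClosed S := by
      have h1 : Continuous fun x : Set.Ioo a b => (A x.1).det :=
        continuousOn_iff_continuous_restrict.mp hgc
      have h2 : Continuous fun x : Set.Ioo a b => mip (A' x.1) (cofm (A x.1)) :=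
        continuousOn_iff_continuous_restrict.mp hφc
      exact (isClosed_eq h1 continuous_const).inter (isClosed_eq h2 continuous_const)
    have hSopen : IsOpen S := by
      rw [isOpen_iff_mem_nhds]
      rintro x ⟨hx1, hx2⟩
      obtain ⟨ε, hε, hJ⟩ := hprop x.1 x.2 hx1 hx2
      have hnb : Set.Ioo (x.1 - ε) (x.1 + ε) ∈ nhds x.1 :=
        Ioo_mem_nhds (by linarith) (by linarith)
      have hpre := continuous_subtype_val.continuousAt.preimage_mem_nhds hnb
      exact Filter.mem_of_superset hpre
        (fun y hy => ⟨(hJ y.1 hy).2.1, (hJ y.1 hy).2.2⟩)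
    have hne : S.Nonempty := ⟨⟨t₀, ht₀⟩, hdet₀, hmip₀⟩
    have hall := IsClopen.eq_univ ⟨hSclosed, hSopen⟩ hne
    have hmem : (⟨t, ht⟩ : Set.Ioo a b) ∈ S := by rw [hall]; trivial
    exact hmem.1
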